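/- Fix integers n ≥ 2 and N ≥ 1, a map g : ℝ^(2n−1) → ℝ that is Lipschitz with constant L_f ≥ 0, a map ĉ : ℝ × ℝ^(2n−1) → ℝ, a dataset of triples (y_i^{++}, ζ_i, u_i) ∈ ℝ × ℝ^(2n−1) × ℝ, i = 1,…,N, and a function γ_u : [0,∞) → [0,∞) such that |u_i − ĉ(y_i^{++}, ζ)| ≤ γ_u(‖ζ_i − ζ‖) for every i and every ζ ∈ ℝ^(2n−1). Define the delayed closed-loop one-step map Φ₂(ζ, y_r) := (y₂,…,yₙ, g(ζ), u₂,…,u_{n−1}, ĉ(y_r, ζ)) for ζ = (y₁,…,yₙ,u₁,…,u_{n−1}), and for each i set ζ_i⁺ := (y_{i,2},…,y_{i,n}, g(ζ_i), u_{i,2},…,u_{i,n−1}, u_i). Then for every i and every ζ ∈ ℝ^(2n−1), ‖ζ_i⁺ − Φ₂(ζ, y_i^{++})‖ ≤ γ_u(‖ζ_i − ζ‖) + (1 + L_f)·‖ζ_i − ζ‖. -/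

import Mathlib

/-- The delayed closed-loop one-step map:
`Φ₂(ζ, yr) = (y₂,…,yₙ, g(ζ), u₂,…,u_{n−1}, ĉ(yr, ζ))` for the augmented state
`ζ = (y₁,…,yₙ,u₁,…,u_{n−1}) ∈ ℝ^(2n−1)`; the one-step output `g(ζ)` does not depend
on the current input, which enters only the last coordinate. -/
noncomputable def Phi2 (n : ℕ) (g : EuclideanSpace ℝ (Fin (2*n-1)) → ℝ)
    (chat : ℝ → EuclideanSpace ℝ (Fin (2*n-1)) → ℝ)
    (ζ : EuclideanSpace ℝ (Fin (2*n-1))) (yr : ℝ) : EuclideanSpace ℝ (Fin (2*n-1)) :=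
  WithLp.toLp 2 (fun (k : Fin (2*n-1)) =>
    if (k : ℕ) = n - 1 then g ζ
    else if h : (k : ℕ) = 2*n - 2 then chat yr ζ
    else ζ ⟨(k : ℕ) + 1, by have := k.isLt; omega⟩)

/-- For a data triple `(y_i^{++}, ζ_i, u_i)`, the shifted successor state
`ζ_i⁺ = (y_{i,2},…,y_{i,n}, g(ζ_i), u_{i,2},…,u_{i,n−1}, u_i)`. -/
noncomputable def zplus2 (n : ℕ) (g : EuclideanSpace ℝ (Fin (2*n-1)) → ℝ)
    (ζ : EuclideanSpace ℝ (Fin (2*n-1))) (ui : ℝ) : EuclideanSpace ℝ (Fin (2*n-1)) :=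
  WithLp.toLp 2 (fun (k : Fin (2*n-1)) =>
    if (k : ℕ) = n - 1 then g ζ
    else if h : (k : ℕ) = 2*n - 2 then ui
    else ζ ⟨(k : ℕ) + 1, by have := k.isLt; omega⟩)

/-- Proposition 5: augmented-state bound for NARX systems with a
one-step input delay: `‖ζ_i⁺ − Φ₂(ζ, y_i^{++})‖ ≤ γ_u(‖ζ_i − ζ‖) + (1 + L_f)·‖ζ_i − ζ‖`. -/
theorem stmt_10 (n N : ℕ) (hn : 2 ≤ n) (hN : 1 ≤ N)
    (g : EuclideanSpace ℝ (Fin (2*n-1)) → ℝ)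
    (Lf : ℝ) (hLf0 : 0 ≤ Lf)
    (hLf : ∀ ζ ζ' : EuclideanSpace ℝ (Fin (2*n-1)), |g ζ - g ζ'| ≤ Lf * ‖ζ - ζ'‖)
    (chat : ℝ → EuclideanSpace ℝ (Fin (2*n-1)) → ℝ)
    (yd : Fin N → ℝ) (ζd : Fin N → EuclideanSpace ℝ (Fin (2*n-1))) (ud : Fin N → ℝ)
    (γu : ℝ → ℝ) (hγu_nonneg : ∀ s, 0 ≤ s → 0 ≤ γu s)
    (hγu : ∀ (i : Fin N) (ζ : EuclideanSpace ℝ (Fin (2*n-1))),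
      |ud i - chat (yd i) ζ| ≤ γu ‖ζd i - ζ‖) :
    ∀ (i : Fin N) (ζ : EuclideanSpace ℝ (Fin (2*n-1))),
      ‖zplus2 n g (ζd i) (ud i) - Phi2 n g chat ζ (yd i)‖ ≤
        γu ‖ζd i - ζ‖ + (1 + Lf) * ‖ζd i - ζ‖ := by
  intro i ζ
  have hm : 2*n - 2 < 2*n - 1 := by omega
  have hn1 : n - 1 < 2*n - 1 := by omega
  have hne : n - 1 ≠ 2*n - 2 := by omega
  set δ : EuclideanSpace ℝ (Fin (2*n-1)) := ζd i - ζ with hδ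
  set A : EuclideanSpace ℝ (Fin (2*n-1)) :=
    EuclideanSpace.single ⟨n-1, hn1⟩ (g (ζd i) - g ζ) with hA
  set B : EuclideanSpace ℝ (Fin (2*n-1)) :=
    EuclideanSpace.single ⟨2*n-2, hm⟩ (ud i - chat (yd i) ζ) with hB
  set C : EuclideanSpace ℝ (Fin (2*n-1)) :=
    WithLp.toLp 2 (fun (k : Fin (2*n-1)) => if (k:ℕ) = n-1 then 0
      else if h : (k:ℕ) = 2*n-2 then 0
      else δ ⟨(k:ℕ)+1, by have := k.isLt; omega⟩) with hC
  have hdecomp : zplus2 n g (ζd i) (ud i) - Phi2 n g chat ζ (yd i) = A + B + C := by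
    ext k
    simp only [PiLp.sub_apply, PiLp.add_apply, hA, hB, zplus2, Phi2,
      EuclideanSpace.single_apply, hC]
    by_cases h1 : (k:ℕ) = n-1
    · have hk2 : (k:ℕ) ≠ 2*n-2 := by omega
      simp [h1, hk2, Fin.ext_iff, hne]
    · by_cases h2 : (k:ℕ) = 2*n-2
      · simp only [h1, h2, Fin.ext_iff, if_false, dif_pos rfl,
          if_neg (by omega : ¬(2*n-2 = n-1))]
        simp [hne, Fin.ext_iff, (by omega : ¬(2*n-2 = n-1))]
      · simp [h1, h2, Fin.ext_iff, hδ, PiLp.sub_apply]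
  have hnδ : (0:ℝ) ≤ ‖δ‖ := norm_nonneg _
  have hAle : ‖A‖ ≤ Lf * ‖δ‖ := by
    rw [hA, EuclideanSpace.norm_single, Real.norm_eq_abs]
    exact hLf _ _
  have hBle : ‖B‖ ≤ γu ‖δ‖ := by
    rw [hB, EuclideanSpace.norm_single, Real.norm_eq_abs]
    exact hγu i ζ
  have hCle : ‖C‖ ≤ ‖δ‖ := by
    rw [EuclideanSpace.norm_eq C, EuclideanSpace.norm_eq δ]
    apply Real.sqrt_le_sqrt
    set S : Finset (Fin (2*n-1)) :=
      Finset.univ.filter (fun k : Fin (2*n-1) => ¬(k:ℕ) = n-1 ∧ ¬(k:ℕ) = 2*n-2) with hS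
    have hmem : ∀ k ∈ S, ¬(k:ℕ) = n-1 ∧ ¬(k:ℕ) = 2*n-2 := by
      intro k hk
      exact (Finset.mem_filter.mp hk).2
    set e : Fin (2*n-1) → Fin (2*n-1) :=
      fun k => ⟨((k:ℕ)+1) % (2*n-1), Nat.mod_lt _ (by omega)⟩ with he
    have heS : ∀ k ∈ S, (e k : ℕ) = (k:ℕ) + 1 := by
      intro k hk
      have h := hmem k hk
      have hlt : (k:ℕ) + 1 < 2*n-1 := by have := k.isLt; omega
      simp [he, Nat.mod_eq_of_lt hlt]
    have h1 : ∑ k, ‖C k‖^2 = ∑ k ∈ S, ‖δ (e k)‖^2 := by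
      rw [hS, Finset.sum_filter]
      apply Finset.sum_congr rfl
      intro k _
      by_cases ha : (k:ℕ) = n-1
      · simp [hC, ha]
      · by_cases hb : (k:ℕ) = 2*n-2
        · simp [hC, ha, hb]
        · have hk : k ∈ S := by simp [hS, ha, hb]
          have hek : e k = ⟨(k:ℕ)+1, by have := k.isLt; omega⟩ :=
            Fin.ext (heS k hk)
          simp only [hC, if_neg ha, dif_neg hb, if_pos (Or.inl rfl), if_pos]
          rw [hek]
          simp [ha, hb]
    rw [h1]
    have hinj : Set.InjOn e S := by
      intro a ha b hb hab
      have h1 := heS a ha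
      have h2 := heS b hb
      apply Fin.ext
      have : (e a : ℕ) = (e b : ℕ) := congrArg Fin.val hab
      omega
    have himg : ∑ j ∈ S.image e, ‖δ j‖^2 = ∑ k ∈ S, ‖δ (e k)‖^2 :=
      Finset.sum_image (fun a ha b hb h => hinj ha hb h)
    rw [← himg]
    apply Finset.sum_le_sum_of_subset_of_nonneg (Finset.subset_univ _)
    intro j _ _
    positivity
  calc ‖zplus2 n g (ζd i) (ud i) - Phi2 n g chat ζ (yd i)‖
      = ‖A + B + C‖ := by rw [hdecomp]
    _ ≤ ‖A‖ + ‖B‖ + ‖C‖ := norm_add₃_le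
    _ ≤ Lf * ‖δ‖ + γu ‖δ‖ + ‖δ‖ := by linarith
    _ = γu ‖δ‖ + (1 + Lf) * ‖δ‖ := by ring
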